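/- Let Σ be a d×d symmetric positive semi-definite matrix with positive entries, fix i = 1, and suppose a nonnegative (d−1)×(q−1) matrix B satisfies B B^T = Σ^{(1)} := Σ^{(−1,−1)} − τ_{−1} τ_{−1}^T, where τ is defined via D_1 = max_{j,k ≠ 1} σ_j1 σ_k1/(σ_jk σ_11), τ_{1,1} = sqrt(σ_11 max(D_1,1)), τ_{j,1} = σ_j1/τ_{1,1}. Then the d×q block matrix A with first column (τ_{1,1}, τ_{2,1}, …, τ_{d,1})^T, first row (τ_{1,1}, 0, …, 0), and lower-right block B satisfies: (A A^T)_{jk} = σ_{jk} for all (j,k) ≠ (1,1), and (A A^T)_{11} = σ_{11} max(D_1, 1) ≥ σ_{11}. -/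
import Mathlib

open Matrix

/-- reassembling the peeled matrix.  With `i = 1` (index `0` in `Fin d`),
if a nonnegative matrix `B` (indexed by the nonzero rows/columns) satisfies
`B Bᵀ = Σ^{(1)}`, then the block matrix `A` with first column `τ`, first row
`(τ_{1,1}, 0, …, 0)` and lower-right block `B` satisfies `(A Aᵀ)_{jk} = σ_{jk}`
for `(j,k) ≠ (1,1)` and `(A Aᵀ)_{11} = σ_{11} max(D_1,1) ≥ σ_{11}`. -/
theorem peeled_block_reassembly (d q : ℕ) [NeZero d] [NeZero q]
    (S : Matrix (Fin d) (Fin d) ℝ)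
    (hsymm : S.IsSymm) (hpos : ∀ j k, 0 < S j k) (hpsd : S.PosSemidef)
    (D1 : ℝ)
    (hD : IsGreatest {x : ℝ | ∃ j k : Fin d, j ≠ 0 ∧ k ≠ 0 ∧
      x = S j 0 * S k 0 / (S j k * S 0 0)} D1)
    (τ : Fin d → ℝ)
    (hτ0 : τ 0 = Real.sqrt (S 0 0 * max D1 1))
    (hτ : ∀ j, j ≠ 0 → τ j = S j 0 / τ 0)
    (B : Matrix (Fin d) (Fin q) ℝ)
    (hBnn : ∀ j l, 0 ≤ B j l)
    (hB : ∀ j k : Fin d, j ≠ 0 → k ≠ 0 →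
      ∑ l ∈ Finset.univ.filter (fun l : Fin q => l ≠ 0), B j l * B k l
        = S j k - τ j * τ k)
    (A : Matrix (Fin d) (Fin q) ℝ)
    (hA : ∀ j l, A j l = if l = 0 then τ j else if j = 0 then 0 else B j l) :
    (∀ j k : Fin d, ¬(j = 0 ∧ k = 0) → (A * Aᵀ) j k = S j k)
      ∧ (A * Aᵀ) 0 0 = S 0 0 * max D1 1
      ∧ S 0 0 ≤ (A * Aᵀ) 0 0 := by
  have hmax : (1:ℝ) ≤ max D1 1 := le_max_right _ _
  have hS00 : 0 < S 0 0 := hpos 0 0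
  have hprod : (0:ℝ) < S 0 0 * max D1 1 :=
    mul_pos hS00 (lt_of_lt_of_le one_pos hmax)
  have hτ0pos : 0 < τ 0 := by rw [hτ0]; exact Real.sqrt_pos.2 hprod
  have hτ0sq : τ 0 * τ 0 = S 0 0 * max D1 1 := by
    rw [hτ0]; exact Real.mul_self_sqrt hprod.le
  have key : ∀ j k : Fin d, (A * Aᵀ) j k =
      τ j * τ k + ∑ l ∈ Finset.univ.filter (fun l : Fin q => l ≠ 0),
        A j l * A k l := by
    intro j k
    rw [Matrix.mul_apply]
    simp only [Matrix.transpose_apply]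
    rw [← Finset.sum_filter_add_sum_filter_not Finset.univ (fun l : Fin q => l = 0)]
    have h0 : Finset.univ.filter (fun l : Fin q => l = 0) = {0} := by
      ext l; simp
    congr 1
    · rw [h0, Finset.sum_singleton, hA, hA]; simp
  have hzero : ∀ k : Fin d,
      ∑ l ∈ Finset.univ.filter (fun l : Fin q => l ≠ 0), A 0 l * A k l = 0 := by
    intro k
    apply Finset.sum_eq_zero
    intro l hl
    rw [Finset.mem_filter] at hl
    rw [hA]
    simp [hl.2]
  have hoff : ∀ j k : Fin d, ¬(j = 0 ∧ k = 0) → (A * Aᵀ) j k = S j k := by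
    intro j k hjk
    by_cases hj : j = 0
    · by_cases hk : k = 0
      · exact absurd ⟨hj, hk⟩ hjk
      · subst hj
        rw [key, hzero, add_zero, hτ k hk]
        have : τ 0 * (S k 0 / τ 0) = S k 0 := by field_simp
        rw [this, ← hsymm.apply k 0]
    · by_cases hk : k = 0
      · subst hk
        rw [key]
        have h2 : ∑ l ∈ Finset.univ.filter (fun l : Fin q => l ≠ 0),
            A j l * A 0 l = 0 := by
          apply Finset.sum_eq_zero
          intro l hl
          rw [Finset.mem_filter] at hl
          rw [hA j l, hA 0 l]
          simp [hl.2]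
        rw [h2, add_zero, hτ j hj]
        field_simp
      · rw [key]
        have h2 : ∑ l ∈ Finset.univ.filter (fun l : Fin q => l ≠ 0),
            A j l * A k l = S j k - τ j * τ k := by
          rw [← hB j k hj hk]
          apply Finset.sum_congr rfl
          intro l hl
          rw [Finset.mem_filter] at hl
          rw [hA j l, hA k l]
          simp [hl.2, hj, hk]
        rw [h2]; ring
  refine ⟨hoff, ?_, ?_⟩
  · rw [key, hzero, add_zero, hτ0sq]
  · rw [key, hzero, add_zero, hτ0sq]
    nlinarith
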